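/- Let Q and G be finite abelian groups of m×m unitary complex matrices, let φ ∈ ℂ^m, and suppose Q and G commute up to a phase factor: for every U ∈ Q and V ∈ G there exists a complex number c with |c| = 1 such that U·V = c·(V·U). Let S = Σ_{U ∈ Q} Σ_{V ∈ G} (UVφ)(UVφ)* be the frame operator of the CGU vector set {UVφ : U ∈ Q, V ∈ G}. Then S·(UV) = (UV)·S for all U ∈ Q, V ∈ G; consequently, if the vectors {UVφ} span ℂ^m, then the dual frame vectors are generated by the single vector S⁻¹φ: S⁻¹(UVφ) = UV(S⁻¹φ), and likewise S^{-1/2}(UVφ) = UV(S^{-1/2}φ) for the canonical tight frame. -/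

import Mathlib

open Matrix
open scoped ComplexOrder

private lemma myMul_vecMulVec {m : ℕ} (A : Matrix (Fin m) (Fin m) ℂ) (x y : Fin m → ℂ) :
    A * vecMulVec x y = vecMulVec (A *ᵥ x) y := by
  ext i j
  simp [Matrix.mul_apply, vecMulVec_apply, Matrix.mulVec, dotProduct, Finset.sum_mul, mul_assoc]

private lemma myVecMulVec_mul {m : ℕ} (A : Matrix (Fin m) (Fin m) ℂ) (x y : Fin m → ℂ) :
    vecMulVec x y * A = vecMulVec x (y ᵥ* A) := by
  ext i j
  simp [Matrix.mul_apply, vecMulVec_apply, Matrix.vecMul, dotProduct, Finset.mul_sum, mul_assoc,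
    mul_comm, mul_left_comm]

private lemma myVecMulVec_smul {m : ℕ} (a b : ℂ) (x y : Fin m → ℂ) :
    vecMulVec (a • x) (b • y) = (a * b) • vecMulVec x y := by
  ext i j
  simp [vecMulVec_apply]
  ring

private lemma myConj_vecMulVec {m : ℕ} (A : Matrix (Fin m) (Fin m) ℂ) (x : Fin m → ℂ) :
    A * vecMulVec x (star x) * Aᴴ = vecMulVec (A *ᵥ x) (star (A *ᵥ x)) := by
  rw [myMul_vecMulVec, myVecMulVec_mul, ← star_mulVec]

private lemma myInvComm {m : ℕ} (M A : Matrix (Fin m) (Fin m) ℂ) (h : M * A = A * M) :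
    M⁻¹ * A = A * M⁻¹ := by
  by_cases hu : IsUnit M.det
  · calc M⁻¹ * A = M⁻¹ * A * (M * M⁻¹) := by rw [Matrix.mul_nonsing_inv M hu, mul_one]
      _ = M⁻¹ * (A * M) * M⁻¹ := by simp only [mul_assoc]
      _ = M⁻¹ * M * (A * M⁻¹) := by rw [← h]; simp only [mul_assoc]
      _ = A * M⁻¹ := by rw [Matrix.nonsing_inv_mul M hu, one_mul]
  · rw [Matrix.nonsing_inv_apply_not_isUnit M hu, zero_mul, mul_zero]

private lemma myMulVecComm {m : ℕ} (M A B : Matrix (Fin m) (Fin m) ℂ) (φ : Fin m → ℂ)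
    (h : M * (A * B) = (A * B) * M) :
    M *ᵥ (A *ᵥ (B *ᵥ φ)) = A *ᵥ (B *ᵥ (M *ᵥ φ)) := by
  calc M *ᵥ (A *ᵥ (B *ᵥ φ)) = (M * (A * B)) *ᵥ φ := by
        rw [mulVec_mulVec, mulVec_mulVec, mul_assoc]
    _ = ((A * B) * M) *ᵥ φ := by rw [h]
    _ = A *ᵥ (B *ᵥ (M *ᵥ φ)) := by rw [mul_assoc, ← mulVec_mulVec, ← mulVec_mulVec]

open scoped MatrixOrder in
private lemma mySqrtComm {m : ℕ} (T S A : Matrix (Fin m) (Fin m) ℂ) (hT : T.PosDef)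
    (hTS : T * T = S) (h1 : A * star A = 1) (h2 : star A * A = 1) (hSA : S * A = A * S) :
    T * A = A * T := by
  have hSps : S.PosSemidef := by
    rw [← hTS]
    have := Matrix.posSemidef_conjTranspose_mul_self T
    rwa [hT.isHermitian.eq] at this
  have hTsqrt : T = CFC.sqrt S :=
    (CFC.sqrt_unique hTS hT.posSemidef.nonneg).symm
  have hBps : (star A * T * A).PosSemidef := by
    have := hT.posSemidef.conjTranspose_mul_mul_same A
    rwa [← Matrix.star_eq_conjTranspose] at this
  have hBsq : (star A * T * A) ^ 2 = S := by
    calc (star A * T * A) ^ 2 = star A * T * (A * star A) * (T * A) := by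
          rw [pow_two]; simp only [mul_assoc]
      _ = star A * (T * T) * A := by rw [h1, mul_one]; simp only [mul_assoc]
      _ = star A * (A * S) := by rw [hTS, ← hSA]; simp only [mul_assoc]
      _ = S := by rw [← mul_assoc, h2, one_mul]
  have hBsqrt : star A * T * A = CFC.sqrt S :=
    (CFC.sqrt_unique (by rw [← pow_two]; exact hBsq) hBps.nonneg).symm
  have hATA : star A * T * A = T := by rw [hBsqrt, ← hTsqrt]
  calc T * A = (A * star A) * (T * A) := by rw [h1, one_mul]
    _ = A * (star A * T * A) := by simp only [mul_assoc]
    _ = A * T := by rw [hATA]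

theorem stmt_12 {m : ℕ} (hm : 0 < m)
    (Q G : Subgroup (Matrix.unitaryGroup (Fin m) ℂ)) [Fintype Q] [Fintype G]
    (habQ : ∀ U V : Q, U * V = V * U)
    (habG : ∀ U V : G, U * V = V * U)
    (hphase : ∀ (U : Q) (V : G), ∃ c : ℂ, ‖c‖ = 1 ∧
      (U : Matrix (Fin m) (Fin m) ℂ) * (V : Matrix (Fin m) (Fin m) ℂ)
        = c • ((V : Matrix (Fin m) (Fin m) ℂ) * (U : Matrix (Fin m) (Fin m) ℂ)))
    (φ : Fin m → ℂ)
    (S : Matrix (Fin m) (Fin m) ℂ)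
    (hS : S = ∑ U : Q, ∑ V : G,
      vecMulVec ((U : Matrix (Fin m) (Fin m) ℂ) *ᵥ ((V : Matrix (Fin m) (Fin m) ℂ) *ᵥ φ))
        (star ((U : Matrix (Fin m) (Fin m) ℂ) *ᵥ ((V : Matrix (Fin m) (Fin m) ℂ) *ᵥ φ)))) :
    (∀ (U : Q) (V : G),
      S * ((U : Matrix (Fin m) (Fin m) ℂ) * (V : Matrix (Fin m) (Fin m) ℂ))
        = ((U : Matrix (Fin m) (Fin m) ℂ) * (V : Matrix (Fin m) (Fin m) ℂ)) * S) ∧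
    (Submodule.span ℂ
        {x : Fin m → ℂ | ∃ (U : Q) (V : G),
          x = (U : Matrix (Fin m) (Fin m) ℂ) *ᵥ ((V : Matrix (Fin m) (Fin m) ℂ) *ᵥ φ)} = ⊤ →
      (∀ (U : Q) (V : G),
        S⁻¹ *ᵥ ((U : Matrix (Fin m) (Fin m) ℂ) *ᵥ ((V : Matrix (Fin m) (Fin m) ℂ) *ᵥ φ))
          = (U : Matrix (Fin m) (Fin m) ℂ) *ᵥ ((V : Matrix (Fin m) (Fin m) ℂ) *ᵥ (S⁻¹ *ᵥ φ))) ∧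
      ∀ T : Matrix (Fin m) (Fin m) ℂ, T.PosDef → T * T = S →
        ∀ (U : Q) (V : G),
          T⁻¹ *ᵥ ((U : Matrix (Fin m) (Fin m) ℂ) *ᵥ ((V : Matrix (Fin m) (Fin m) ℂ) *ᵥ φ))
            = (U : Matrix (Fin m) (Fin m) ℂ) *ᵥ ((V : Matrix (Fin m) (Fin m) ℂ) *ᵥ (T⁻¹ *ᵥ φ))) := by
  have coeQ : ∀ U U' : Q, ((U * U' : Q) : Matrix (Fin m) (Fin m) ℂ)
      = (U : Matrix (Fin m) (Fin m) ℂ) * (U' : Matrix (Fin m) (Fin m) ℂ) := fun U U' => rfl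
  have coeG : ∀ V V' : G, ((V * V' : G) : Matrix (Fin m) (Fin m) ℂ)
      = (V : Matrix (Fin m) (Fin m) ℂ) * (V' : Matrix (Fin m) (Fin m) ℂ) := fun V V' => rfl
  have hstar : ∀ (U : Q) (V : G),
      star ((U : Matrix (Fin m) (Fin m) ℂ) * (V : Matrix (Fin m) (Fin m) ℂ))
        * ((U : Matrix (Fin m) (Fin m) ℂ) * (V : Matrix (Fin m) (Fin m) ℂ)) = 1 := by
    intro U V
    simpa using Matrix.UnitaryGroup.star_mul_self ((U : Matrix.unitaryGroup (Fin m) ℂ)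
      * (V : Matrix.unitaryGroup (Fin m) ℂ))
  have hstar' : ∀ (U : Q) (V : G),
      ((U : Matrix (Fin m) (Fin m) ℂ) * (V : Matrix (Fin m) (Fin m) ℂ))
        * star ((U : Matrix (Fin m) (Fin m) ℂ) * (V : Matrix (Fin m) (Fin m) ℂ)) = 1 := by
    intro U V
    have h1 := ((U : Matrix.unitaryGroup (Fin m) ℂ) * (V : Matrix.unitaryGroup (Fin m) ℂ)).prop
    rw [Matrix.mem_unitaryGroup_iff] at h1
    simpa using h1
  have key : ∀ (U : Q) (V : G),
      ((U : Matrix (Fin m) (Fin m) ℂ) * (V : Matrix (Fin m) (Fin m) ℂ)) * S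
        * star ((U : Matrix (Fin m) (Fin m) ℂ) * (V : Matrix (Fin m) (Fin m) ℂ)) = S := by
    intro U V
    calc ((U : Matrix (Fin m) (Fin m) ℂ) * (V : Matrix (Fin m) (Fin m) ℂ)) * S
        * star ((U : Matrix (Fin m) (Fin m) ℂ) * (V : Matrix (Fin m) (Fin m) ℂ))
        = ∑ U' : Q, ∑ V' : G,
          ((U : Matrix (Fin m) (Fin m) ℂ) * (V : Matrix (Fin m) (Fin m) ℂ)) * vecMulVec
            ((U' : Matrix (Fin m) (Fin m) ℂ) *ᵥ ((V' : Matrix (Fin m) (Fin m) ℂ) *ᵥ φ))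
            (star ((U' : Matrix (Fin m) (Fin m) ℂ) *ᵥ ((V' : Matrix (Fin m) (Fin m) ℂ) *ᵥ φ)))
            * star ((U : Matrix (Fin m) (Fin m) ℂ) * (V : Matrix (Fin m) (Fin m) ℂ)) := by
          rw [hS, Finset.mul_sum, Finset.sum_mul]
          refine Finset.sum_congr rfl fun U' _ => ?_
          rw [Finset.mul_sum, Finset.sum_mul]
      _ = ∑ U' : Q, ∑ V' : G, vecMulVec
            (((U * U' : Q) : Matrix (Fin m) (Fin m) ℂ) *ᵥ
              (((V * V' : G) : Matrix (Fin m) (Fin m) ℂ) *ᵥ φ))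
            (star (((U * U' : Q) : Matrix (Fin m) (Fin m) ℂ) *ᵥ
              (((V * V' : G) : Matrix (Fin m) (Fin m) ℂ) *ᵥ φ))) := by
          refine Finset.sum_congr rfl fun U' _ => Finset.sum_congr rfl fun V' _ => ?_
          obtain ⟨c, hc, heq⟩ := hphase U' V
          have hc0 : c ≠ 0 := by
            intro h; rw [h] at hc; simp at hc
          have hVU : (V : Matrix (Fin m) (Fin m) ℂ) * (U' : Matrix (Fin m) (Fin m) ℂ)
              = c⁻¹ • ((U' : Matrix (Fin m) (Fin m) ℂ) * (V : Matrix (Fin m) (Fin m) ℂ)) := by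
            rw [heq, smul_smul, inv_mul_cancel₀ hc0, one_smul]
          have hprod : ((U : Matrix (Fin m) (Fin m) ℂ) * (V : Matrix (Fin m) (Fin m) ℂ))
                * (U' : Matrix (Fin m) (Fin m) ℂ) * (V' : Matrix (Fin m) (Fin m) ℂ)
              = c⁻¹ • (((U * U' : Q) : Matrix (Fin m) (Fin m) ℂ)
                  * ((V * V' : G) : Matrix (Fin m) (Fin m) ℂ)) := by
            rw [coeQ, coeG]
            have ha : ((U : Matrix (Fin m) (Fin m) ℂ) * (V : Matrix (Fin m) (Fin m) ℂ))
                * (U' : Matrix (Fin m) (Fin m) ℂ)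
                = (U : Matrix (Fin m) (Fin m) ℂ)
                  * ((V : Matrix (Fin m) (Fin m) ℂ) * (U' : Matrix (Fin m) (Fin m) ℂ)) := by
              rw [mul_assoc]
            rw [ha, hVU, mul_smul_comm, smul_mul_assoc]
            congr 1
            simp only [mul_assoc]
          have hvec : ((U : Matrix (Fin m) (Fin m) ℂ) * (V : Matrix (Fin m) (Fin m) ℂ)) *ᵥ
              ((U' : Matrix (Fin m) (Fin m) ℂ) *ᵥ ((V' : Matrix (Fin m) (Fin m) ℂ) *ᵥ φ))
              = c⁻¹ • ((((U * U' : Q) : Matrix (Fin m) (Fin m) ℂ)) *ᵥ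
                  (((V * V' : G) : Matrix (Fin m) (Fin m) ℂ) *ᵥ φ)) := by
            calc ((U : Matrix (Fin m) (Fin m) ℂ) * (V : Matrix (Fin m) (Fin m) ℂ)) *ᵥ
                ((U' : Matrix (Fin m) (Fin m) ℂ) *ᵥ ((V' : Matrix (Fin m) (Fin m) ℂ) *ᵥ φ))
                = (((U : Matrix (Fin m) (Fin m) ℂ) * (V : Matrix (Fin m) (Fin m) ℂ))
                    * (U' : Matrix (Fin m) (Fin m) ℂ) * (V' : Matrix (Fin m) (Fin m) ℂ)) *ᵥ φ := by
                  rw [mulVec_mulVec, mulVec_mulVec]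
              _ = (c⁻¹ • (((U * U' : Q) : Matrix (Fin m) (Fin m) ℂ)
                    * ((V * V' : G) : Matrix (Fin m) (Fin m) ℂ))) *ᵥ φ := by rw [hprod]
              _ = c⁻¹ • ((((U * U' : Q) : Matrix (Fin m) (Fin m) ℂ)
                    * ((V * V' : G) : Matrix (Fin m) (Fin m) ℂ)) *ᵥ φ) :=
                  smul_mulVec _ _ _
              _ = c⁻¹ • ((((U * U' : Q) : Matrix (Fin m) (Fin m) ℂ)) *ᵥ
                    (((V * V' : G) : Matrix (Fin m) (Fin m) ℂ) *ᵥ φ)) := by rw [mulVec_mulVec]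
          have hcc : c⁻¹ * star c⁻¹ = 1 := by
            have h1 : c * star c = 1 := by
              rw [Complex.star_def, Complex.mul_conj, Complex.normSq_eq_norm_sq, hc]
              norm_num
            rw [star_inv₀, ← mul_inv, h1, inv_one]
          rw [Matrix.star_eq_conjTranspose, myConj_vecMulVec, hvec, star_smul,
            myVecMulVec_smul, hcc, one_smul]
      _ = S := by
          rw [hS]
          refine Fintype.sum_equiv (Equiv.mulLeft U) _ _ fun U' => ?_
          exact Fintype.sum_equiv (Equiv.mulLeft V) _ _ fun V' => rfl
  have hcomm : ∀ (U : Q) (V : G),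
      S * ((U : Matrix (Fin m) (Fin m) ℂ) * (V : Matrix (Fin m) (Fin m) ℂ))
        = ((U : Matrix (Fin m) (Fin m) ℂ) * (V : Matrix (Fin m) (Fin m) ℂ)) * S := by
    intro U V
    calc S * ((U : Matrix (Fin m) (Fin m) ℂ) * (V : Matrix (Fin m) (Fin m) ℂ))
        = ((U : Matrix (Fin m) (Fin m) ℂ) * (V : Matrix (Fin m) (Fin m) ℂ)) * S
          * (star ((U : Matrix (Fin m) (Fin m) ℂ) * (V : Matrix (Fin m) (Fin m) ℂ))
            * ((U : Matrix (Fin m) (Fin m) ℂ) * (V : Matrix (Fin m) (Fin m) ℂ))) := by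
          conv_rhs => rw [← mul_assoc, key U V]
      _ = ((U : Matrix (Fin m) (Fin m) ℂ) * (V : Matrix (Fin m) (Fin m) ℂ)) * S := by
          rw [hstar U V, mul_one]
  refine ⟨hcomm, fun _ => ⟨?_, ?_⟩⟩
  · intro U V
    exact myMulVecComm _ _ _ φ (myInvComm S _ (hcomm U V))
  · intro T hT hTS U V
    have hTA := mySqrtComm T S ((U : Matrix (Fin m) (Fin m) ℂ) * (V : Matrix (Fin m) (Fin m) ℂ))
      hT hTS (hstar' U V) (hstar U V) (hcomm U V)
    exact myMulVecComm _ _ _ φ (myInvComm T _ hTA)
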